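/- Let G be a simple graph, let u and v be vertices that are biconnected in G, and let P be any path from u to v in G. Then every two distinct vertices lying on P are biconnected in G. -/

import Mathlib

open SimpleGraph Walk Classical

namespace BicAux

variable {V : Type*} {H : SimpleGraph V}

lemma isPath_append' {a b c : V} {p : H.Walk a b} {q : H.Walk b c}
    (hp : p.IsPath) (hq : q.IsPath)
    (h : ∀ x, x ∈ p.support → x ∈ q.support → x = b) : (p.append q).IsPath := by
  rw [Walk.isPath_def, Walk.support_append]
  refine List.Nodup.append hp.support_nodup hq.support_nodup.tail ?_
  intro x hxp hxq
  have hxq' : x ∈ q.support := List.mem_of_mem_tail hxq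
  have hxb : x = b := h x hxp hxq'
  subst hxb
  have hnd := hq.support_nodup
  rw [q.support_eq_cons] at hnd
  exact (List.nodup_cons.mp hnd).1 hxq

lemma isPath_concat' {a b c : V} {p : H.Walk a b} (hp : p.IsPath) (h : H.Adj b c)
    (hc : c ∉ p.support) : (p.concat h).IsPath := by
  rw [Walk.concat_eq_append]
  refine isPath_append' hp (by simp [h.ne]) ?_
  intro x hx1 hx2
  simp only [Walk.support_cons, Walk.support_nil, List.mem_cons, List.not_mem_nil, or_false] at hx2
  rcases hx2 with rfl | rfl
  · rfl
  · exact absurd hx1 hc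

lemma end_not_mem_takeUntil [DecidableEq V] {s t x : V} {R : H.Walk s t} (hR : R.IsPath)
    (hx : x ∈ R.support) (hxt : x ≠ t) : t ∉ (R.takeUntil x hx).support := by
  intro ht
  have hnd := hR.support_nodup
  rw [← R.take_spec hx, Walk.support_append] at hnd
  have hdisj := List.disjoint_of_nodup_append hnd
  have ht2 : t ∈ (R.dropUntil x hx).support.tail := by
    have hend := (R.dropUntil x hx).end_mem_support
    rw [(R.dropUntil x hx).support_eq_cons] at hend
    rcases List.mem_cons.mp hend with h1 | h1
    · exact absurd h1.symm hxt
    · exact h1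
  exact hdisj ht ht2

lemma seg [DecidableEq V] {s t z w : V} (R : H.Walk s t) (hR : R.IsPath)
    (hz : z ∈ R.support) (hzw : z ≠ w) :
    (∃ W : H.Walk z s, w ∉ W.support) ∨ (∃ W : H.Walk z t, w ∉ W.support) := by
  by_cases h1 : w ∈ (R.takeUntil z hz).support
  · right
    refine ⟨R.dropUntil z hz, ?_⟩
    intro hw
    have hnd := hR.support_nodup
    rw [← R.take_spec hz, Walk.support_append] at hnd
    have hdisj := List.disjoint_of_nodup_append hnd
    rw [(R.dropUntil z hz).support_eq_cons] at hw
    rcases List.mem_cons.mp hw with h2 | h2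
    · exact hzw h2.symm
    · exact hdisj h1 h2
  · left
    exact ⟨(R.takeUntil z hz).reverse, by simpa [Walk.support_reverse] using h1⟩

lemma exists_first_mem {b a : V} (C : Set V) :
    ∀ (Q : H.Walk b a), Q.IsPath → b ∉ C → a ∈ C →
    ∃ x, x ∈ C ∧ ∃ Q1 : H.Walk b x, Q1.IsPath ∧ (∀ y ∈ Q1.support, y ∈ Q.support) ∧
      (∀ y ∈ Q1.support, y ∈ C → y = x) := by
  intro Q
  induction Q with
  | nil => exact fun _ hb ha => absurd ha hb
  | @cons b c a' h Q' ih =>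
    intro hp hb ha
    by_cases hc : c ∈ C
    · refine ⟨c, hc, Walk.cons h Walk.nil, by simp [h.ne], ?_, ?_⟩
      · intro y hy
        simp only [Walk.support_cons, Walk.support_nil, List.mem_cons, List.not_mem_nil, or_false] at hy ⊢
        rcases hy with rfl | rfl
        · left; rfl
        · right; exact Q'.start_mem_support
      · intro y hy hyC
        simp only [Walk.support_cons, Walk.support_nil, List.mem_cons, List.not_mem_nil, or_false] at hy
        rcases hy with rfl | hy
        · exact absurd hyC hb
        · simpa using hy
    · have hp' := (Walk.cons_isPath_iff h Q').mp hp
      rcases ih hp'.1 hc ha with ⟨x, hxC, Q1, hQ1, hsub, honly⟩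
      refine ⟨x, hxC, Walk.cons h Q1, ?_, ?_, ?_⟩
      · exact hQ1.cons (fun hbQ => hp'.2 (hsub _ hbQ))
      · intro y hy
        simp only [Walk.support_cons, List.mem_cons] at hy ⊢
        rcases hy with rfl | hy
        · left; rfl
        · right; exact hsub _ hy
      · intro y hy hyC
        simp only [Walk.support_cons, List.mem_cons] at hy
        rcases hy with rfl | hy
        · exact absurd hyC hb
        · exact honly _ hy hyC


def TwoPaths (H : SimpleGraph V) (a b : V) : Prop :=
  ∃ r s : H.Walk a b, r.IsPath ∧ s.IsPath ∧
    (∀ x, x ∈ r.support → x ∈ s.support → x = a ∨ x = b) ∧ r.edges ≠ s.edges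

section Main

variable [DecidableEq V] (S : Set V)
  (hS : ∀ x y, H.Adj x y → x ∈ S)
  (hyp : ∀ w x y, x ∈ S → y ∈ S → x ≠ w → y ≠ w → ∃ W : H.Walk x y, w ∉ W.support)
  (hdeg : ∀ x ∈ S, ∀ y, ∃ c, H.Adj x c ∧ c ≠ y)

include hS hyp hdeg in
lemma base {a b : V} (hab : H.Adj a b) : TwoPaths H a b := by
  obtain ⟨c, hac, hcb⟩ := hdeg a (hS _ _ hab) b
  obtain ⟨Q, hQ⟩ := hyp a c b (hS _ _ hac.symm) (hS _ _ hab.symm) hac.ne' hab.ne'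
  set W1 : H.Walk a b := Walk.cons hac Q with hW1
  have hne : s(a, b) ∉ W1.bypass.edges := by
    intro hmem
    have hmem' : s(a, b) ∈ W1.edges := W1.edges_bypass_subset hmem
    rw [hW1, Walk.edges_cons] at hmem'
    rcases List.mem_cons.mp hmem' with h1 | h1
    · rw [Sym2.eq_iff] at h1
      rcases h1 with ⟨_, h2⟩ | ⟨h2, h3⟩
      · exact hcb h2.symm
      · exact hac.ne h2
    · exact hQ (Q.fst_mem_support_of_mem_edges h1)
  refine ⟨Walk.cons hab Walk.nil, W1.bypass, by simp [hab.ne], W1.bypass_isPath, ?_, ?_⟩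
  · intro x hx _
    simp only [Walk.support_cons, Walk.support_nil, List.mem_cons, List.not_mem_nil,
      or_false] at hx
    exact hx
  · intro hEq
    apply hne
    rw [← hEq]
    simp

lemma step1 {a c b : V} (p1 p2 : H.Walk a c) (hp1 : p1.IsPath) (hp2 : p2.IsPath)
    (hd : ∀ x, x ∈ p1.support → x ∈ p2.support → x = a ∨ x = c)
    (hadj : H.Adj c b) (hba : b ≠ a) (hbc : b ≠ c) (hbp1 : b ∈ p1.support) :
    TwoPaths H a b := by
  have hbp2 : b ∉ p2.support := by
    intro hb2
    rcases hd b hbp1 hb2 with rfl | rfl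
    · exact hba rfl
    · exact hbc rfl
  have hcr : c ∉ (p1.takeUntil b hbp1).support := end_not_mem_takeUntil hp1 hbp1 hbc
  refine ⟨p1.takeUntil b hbp1, p2.concat hadj, hp1.takeUntil hbp1,
    isPath_concat' hp2 hadj hbp2, ?_, ?_⟩
  · intro x hx hx2
    rw [Walk.support_concat] at hx2
    rw [List.mem_append, List.mem_singleton] at hx2
    rcases hx2 with hx2 | rfl
    · have hx1 : x ∈ p1.support := Walk.support_takeUntil_subset _ hbp1 hx
      rcases hd x hx1 hx2 with rfl | rfl
      · exact Or.inl rfl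
      · exact absurd hx hcr
    · exact Or.inr rfl
  · intro hEq
    apply hcr
    apply Walk.fst_mem_support_of_mem_edges (t := c) (u := b)
    rw [hEq, Walk.edges_concat]
    simp

lemma step2 {a c b x : V} (p1 p2 : H.Walk a c) (hp1 : p1.IsPath) (hp2 : p2.IsPath)
    (hd : ∀ y, y ∈ p1.support → y ∈ p2.support → y = a ∨ y = c)
    (hadj : H.Adj c b) (hba : b ≠ a) (hb1 : b ∉ p1.support) (hb2 : b ∉ p2.support)
    (hx : x ∈ p1.support) (Q1 : H.Walk b x) (hQ1 : Q1.IsPath) (hQ1c : c ∉ Q1.support)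
    (honly : ∀ y ∈ Q1.support, (y ∈ p1.support ∨ y ∈ p2.support) → y = x) :
    TwoPaths H a b := by
  have hxc : x ≠ c := fun h => hQ1c (h ▸ Q1.end_mem_support)
  have hcr : c ∉ (p1.takeUntil x hx).support := end_not_mem_takeUntil hp1 hx hxc
  set r : H.Walk a b := (p1.takeUntil x hx).append Q1.reverse with hr
  have hrsupp : ∀ y, y ∈ r.support → y ∈ (p1.takeUntil x hx).support ∨ y ∈ Q1.support := by
    intro y hy
    rw [hr, Walk.mem_support_append_iff] at hy
    rcases hy with hy | hy
    · exact Or.inl hy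
    · right; rwa [Walk.support_reverse, List.mem_reverse] at hy
  have hrpath : r.IsPath := by
    refine isPath_append' (hp1.takeUntil hx) hQ1.reverse ?_
    intro y hy1 hy2
    rw [Walk.support_reverse, List.mem_reverse] at hy2
    exact honly y hy2 (Or.inl (Walk.support_takeUntil_subset _ hx hy1))
  have hcnr : c ∉ r.support := by
    intro hcrr
    rcases hrsupp c hcrr with h1 | h1
    · exact hcr h1
    · exact hQ1c h1
  refine ⟨r, p2.concat hadj, hrpath, isPath_concat' hp2 hadj hb2, ?_, ?_⟩
  · intro y hy hy2
    rw [Walk.support_concat] at hy2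
    rw [List.mem_append, List.mem_singleton] at hy2
    rcases hy2 with hy2 | rfl
    · rcases hrsupp y hy with h1 | h1
      · have hy1 : y ∈ p1.support := Walk.support_takeUntil_subset _ hx h1
        rcases hd y hy1 hy2 with rfl | rfl
        · exact Or.inl rfl
        · exact absurd hy hcnr
      · have hyx : y = x := honly y h1 (Or.inr hy2)
        subst hyx
        rcases hd y (Walk.support_takeUntil_subset _ hx ((p1.takeUntil y hx).end_mem_support)) hy2
          with rfl | rfl
        · exact Or.inl rfl
        · exact absurd rfl hxc
    · exact Or.inr rfl
  · intro hEq
    apply hcnr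
    apply Walk.fst_mem_support_of_mem_edges (t := c) (u := b)
    rw [hEq, Walk.edges_concat]
    simp

include hS hyp hdeg in
lemma key : ∀ n {a b : V}, a ≠ b → a ∈ S → b ∈ S →
    ∀ (W : H.Walk b a), W.length ≤ n → TwoPaths H a b := by
  intro n
  induction n with
  | zero =>
    intro a b hab _ _ W hW
    exact absurd (Walk.eq_of_length_eq_zero (Nat.le_zero.mp hW)).symm hab
  | succ n ihn =>
    intro a b hab ha hb W hW
    cases W with
    | nil => exact absurd rfl hab.symm
    | @cons _ c _ h W2 =>
      by_cases hca : c = a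
      · subst hca
        exact base S hS hyp hdeg h.symm
      · have hW2 : W2.length ≤ n := Nat.succ_le_succ_iff.mp (by simpa using hW)
        have hc : c ∈ S := hS _ _ h.symm
        obtain ⟨r0, s0, hr0, hs0, hd0, _⟩ :=
          ihn (fun hac => hca hac.symm) ha hc W2 hW2
        by_cases hb1 : b ∈ r0.support
        · exact step1 r0 s0 hr0 hs0 hd0 h.symm hab.symm h.ne hb1
        by_cases hb2 : b ∈ s0.support
        · exact step1 s0 r0 hs0 hr0 (fun x h1 h2 => hd0 x h2 h1) h.symm hab.symm h.ne hb2
        obtain ⟨Q0, hQ0⟩ := hyp c b a hb ha h.ne (fun e => hca e.symm)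
        have hQc : c ∉ Q0.bypass.support := fun hx => hQ0 (Q0.support_bypass_subset hx)
        obtain ⟨x, hxC, Q1, hQ1p, hQ1sub, honly⟩ :=
          exists_first_mem {y | y ∈ r0.support ∨ y ∈ s0.support} Q0.bypass Q0.bypass_isPath
            (by simp [hb1, hb2]) (Or.inl r0.start_mem_support)
        have hQ1c : c ∉ Q1.support := fun hy => hQc (hQ1sub _ hy)
        rcases hxC with hx | hx
        · exact step2 r0 s0 hr0 hs0 hd0 h.symm hab.symm hb1 hb2 hx Q1 hQ1p hQ1c honly
        · exact step2 s0 r0 hs0 hr0 (fun y h1 h2 => hd0 y h2 h1) h.symm hab.symm hb2 hb1 hx Q1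
            hQ1p hQ1c (fun y hy hy2 => honly y hy (hy2.symm))

end Main


lemma exists_adj_snd {s t : V} (R : H.Walk s t) (hst : s ≠ t) :
    ∃ (c : V) (h' : H.Adj s c) (R' : H.Walk c t), R = Walk.cons h' R' := by
  cases R with
  | nil => exact absurd rfl hst
  | cons h R' => exact ⟨_, h, R', rfl⟩

lemma eq_edge_of_length_one {u v : V} {p : H.Walk u v} (h : p.length = 1) :
    ∃ h' : H.Adj u v, p = Walk.cons h' Walk.nil := by
  cases p with
  | nil => simp at h
  | cons h' t =>
    cases t with
    | nil => exact ⟨h', rfl⟩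
    | cons h'' t' => simp [Walk.length_cons] at h

lemma internal_two_nbrs [DecidableEq V] {s t z : V} (R : H.Walk s t) (hR : R.IsPath)
    (hz : z ∈ R.support) (hzs : z ≠ s) (hzt : z ≠ t) :
    ∃ c1 c2, c1 ≠ c2 ∧ H.Adj z c1 ∧ H.Adj z c2 := by
  obtain ⟨c1, h1, R1', hR1⟩ := exists_adj_snd (R.takeUntil z hz).reverse hzs
  obtain ⟨c2, h2, R2', hR2⟩ := exists_adj_snd (R.dropUntil z hz) hzt
  have hc1 : c1 ∈ (R.takeUntil z hz).support := by
    have : c1 ∈ (R.takeUntil z hz).reverse.support := by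
      rw [hR1, Walk.support_cons]
      exact List.mem_cons.mpr (Or.inr R1'.start_mem_support)
    rwa [Walk.support_reverse, List.mem_reverse] at this
  have hc2 : c2 ∈ (R.dropUntil z hz).support.tail := by
    rw [hR2, Walk.support_cons]
    exact R2'.start_mem_support
  have hnd := hR.support_nodup
  rw [← R.take_spec hz, Walk.support_append] at hnd
  have hdisj := List.disjoint_of_nodup_append hnd
  exact ⟨c1, c2, fun e => hdisj hc1 (e ▸ hc2), h1, h2⟩

lemma endpoint_two_nbrs {u v : V} (p1 q1 : H.Walk u v) (hp : p1.IsPath) (hq : q1.IsPath)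
    (huv : u ≠ v)
    (hd : ∀ x, x ∈ p1.support → x ∈ q1.support → x = u ∨ x = v) :
    (∃ c1 c2, c1 ≠ c2 ∧ H.Adj u c1 ∧ H.Adj u c2) ∨ (p1.length = 1 ∧ q1.length = 1) := by
  obtain ⟨c1, h1, p', hp'⟩ := exists_adj_snd p1 huv
  obtain ⟨c2, h2, q', hq'⟩ := exists_adj_snd q1 huv
  by_cases hcc : c1 = c2
  · subst hcc
    right
    have hc1p : c1 ∈ p1.support := by
      rw [hp', Walk.support_cons]
      exact List.mem_cons.mpr (Or.inr p'.start_mem_support)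
    have hc1q : c1 ∈ q1.support := by
      rw [hq', Walk.support_cons]
      exact List.mem_cons.mpr (Or.inr q'.start_mem_support)
    rcases hd c1 hc1p hc1q with hcu | hcv
    · exact absurd hcu.symm h1.ne
    · subst hcv
      have hp'' : p' = Walk.nil := by
        have : p'.IsPath := by
          rw [hp'] at hp
          exact ((Walk.cons_isPath_iff _ _).mp hp).1
        exact (Walk.isPath_iff_eq_nil).mp this
      have hq'' : q' = Walk.nil := by
        have : q'.IsPath := by
          rw [hq'] at hq
          exact ((Walk.cons_isPath_iff _ _).mp hq).1
        exact (Walk.isPath_iff_eq_nil).mp this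
      subst hp''; subst hq''
      rw [hp', hq']
      simp
  · exact Or.inl ⟨c1, c2, hcc, h1, h2⟩

end BicAux

/-- Two vertices `a` and `b` of a simple graph `H` are *biconnected* in `H` if `a ≠ b` and
there exist two distinct paths from `a` to `b` in `H` whose only common vertices are
`a` and `b`. -/
def Biconnected {V : Type*} (H : SimpleGraph V) (a b : V) : Prop :=
  a ≠ b ∧ ∃ p q : H.Path a b, p ≠ q ∧
    ∀ x, x ∈ p.1.support → x ∈ q.1.support → (x = a ∨ x = b)

/-- Let `G` be a simple graph, let `u` and `v` be vertices that are biconnected in `G`,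
and let `P` be any path from `u` to `v` in `G`. Then every two distinct vertices lying on
`P` are biconnected in `G`. -/
theorem biconnected_of_mem_path {V : Type*} (G : SimpleGraph V) (u v : V)
    (h : Biconnected G u v) (P : G.Path u v) (a b : V)
    (ha : a ∈ P.1.support) (hb : b ∈ P.1.support) (hab : a ≠ b) :
    Biconnected G a b := by
  classical
  obtain ⟨huv, p0, q0, hpq, hdisj0⟩ := h
  set E : Set (Sym2 V) := {e | e ∈ p0.1.edges ∨ e ∈ q0.1.edges ∨ e ∈ P.1.edges} with hE
  set H' : SimpleGraph V := SimpleGraph.fromEdgeSet E with hH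
  have hEG : ∀ e ∈ E, e ∈ G.edgeSet := by
    rintro e (h1 | h1 | h1) <;> exact Walk.edges_subset_edgeSet _ h1
  have hHe : ∀ e ∈ H'.edgeSet, e ∈ G.edgeSet := by
    rw [hH, SimpleGraph.edgeSet_fromEdgeSet]
    rintro e ⟨he, -⟩
    exact hEG e he
  have hto : ∀ {x y : V} (Wk : G.Walk x y), (∀ e ∈ Wk.edges, e ∈ E) →
      ∀ e ∈ Wk.edges, e ∈ H'.edgeSet := by
    intro x y Wk hW e he
    rw [hH, SimpleGraph.edgeSet_fromEdgeSet]
    exact ⟨hW e he, G.not_isDiag_of_mem_edgeSet (Walk.edges_subset_edgeSet _ he)⟩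
  have pf1 : ∀ e ∈ p0.1.edges, e ∈ H'.edgeSet := hto p0.1 (fun e he => Or.inl he)
  have pf2 : ∀ e ∈ q0.1.edges, e ∈ H'.edgeSet := hto q0.1 (fun e he => Or.inr (Or.inl he))
  have pf3 : ∀ e ∈ P.1.edges, e ∈ H'.edgeSet := hto P.1 (fun e he => Or.inr (Or.inr he))
  set p1 : H'.Walk u v := p0.1.transfer H' pf1 with hp1def
  set q1 : H'.Walk u v := q0.1.transfer H' pf2 with hq1def
  set P1 : H'.Walk u v := P.1.transfer H' pf3 with hP1def
  have hp1 : p1.IsPath := p0.2.transfer pf1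
  have hq1 : q1.IsPath := q0.2.transfer pf2
  have hP1 : P1.IsPath := P.2.transfer pf3
  have sp1 : p1.support = p0.1.support := Walk.support_transfer _ pf1
  have sq1 : q1.support = q0.1.support := Walk.support_transfer _ pf2
  have sP1 : P1.support = P.1.support := Walk.support_transfer _ pf3
  set S : Set V := {z | z ∈ p0.1.support ∨ z ∈ q0.1.support ∨ z ∈ P.1.support} with hSdef
  have hS : ∀ x y : V, H'.Adj x y → x ∈ S := by
    intro x y hxy
    rw [hH, SimpleGraph.fromEdgeSet_adj] at hxy
    rcases hxy.1 with h1 | h1 | h1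
    · exact Or.inl (Walk.fst_mem_support_of_mem_edges _ h1)
    · exact Or.inr (Or.inl (Walk.fst_mem_support_of_mem_edges _ h1))
    · exact Or.inr (Or.inr (Walk.fst_mem_support_of_mem_edges _ h1))
  have hd1 : ∀ x, x ∈ p1.support → x ∈ q1.support → x = u ∨ x = v := by
    intro x h1 h2
    rw [sp1] at h1; rw [sq1] at h2
    exact hdisj0 x h1 h2
  -- the hypothesis `hyp` : deleting any vertex leaves everything connected
  have hseg : ∀ z w, z ∈ S → z ≠ w →
      (∃ W : H'.Walk z u, w ∉ W.support) ∨ (∃ W : H'.Walk z v, w ∉ W.support) := by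
    intro z w hz hzw
    rcases hz with h1 | h1 | h1
    · exact BicAux.seg p1 hp1 (by rwa [sp1]) hzw
    · exact BicAux.seg q1 hq1 (by rwa [sq1]) hzw
    · exact BicAux.seg P1 hP1 (by rwa [sP1]) hzw
  have hUV : ∀ w, w ≠ u → w ≠ v → ∃ W : H'.Walk u v, w ∉ W.support := by
    intro w hwu hwv
    by_cases hw : w ∈ p1.support
    · refine ⟨q1, fun h2 => ?_⟩
      rcases hd1 w hw h2 with rfl | rfl
      · exact hwu rfl
      · exact hwv rfl
    · exact ⟨p1, hw⟩
  have hyp : ∀ w x y, x ∈ S → y ∈ S → x ≠ w → y ≠ w →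
      ∃ W : H'.Walk x y, w ∉ W.support := by
    intro w x y hx hy hxw hyw
    have key : ∃ m, ∀ z, z ∈ S → z ≠ w → ∃ W : H'.Walk z m, w ∉ W.support := by
      by_cases hwu : w = u
      · refine ⟨v, fun z hz hzw => ?_⟩
        rcases hseg z w hz hzw with ⟨W, hW⟩ | ⟨W, hW⟩
        · exact absurd (hwu ▸ W.end_mem_support) hW
        · exact ⟨W, hW⟩
      · by_cases hwv : w = v
        · refine ⟨u, fun z hz hzw => ?_⟩
          rcases hseg z w hz hzw with ⟨W, hW⟩ | ⟨W, hW⟩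
          · exact ⟨W, hW⟩
          · exact absurd (hwv ▸ W.end_mem_support) hW
        · refine ⟨v, fun z hz hzw => ?_⟩
          rcases hseg z w hz hzw with ⟨W, hW⟩ | ⟨W, hW⟩
          · obtain ⟨WU, hWU⟩ := hUV w hwu hwv
            refine ⟨W.append WU, fun hmem => ?_⟩
            rcases (Walk.mem_support_append_iff _ _).mp hmem with h2 | h2
            · exact hW h2
            · exact hWU h2
          · exact ⟨W, hW⟩
    obtain ⟨m, hm⟩ := key
    obtain ⟨W1, h1⟩ := hm x hx hxw
    obtain ⟨W2, h2⟩ := hm y hy hyw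
    refine ⟨W1.append W2.reverse, fun hmem => ?_⟩
    rcases (Walk.mem_support_append_iff _ _).mp hmem with h3 | h3
    · exact h1 h3
    · rw [Walk.support_reverse, List.mem_reverse] at h3
      exact h2 h3
  -- degree hypothesis
  have hlen01 : p0.1.length = p1.length := by
    rw [← Walk.length_edges, ← Walk.length_edges, Walk.edges_transfer]
  have hlen02 : q0.1.length = q1.length := by
    rw [← Walk.length_edges, ← Walk.length_edges, Walk.edges_transfer]
  have hcontra : p1.length = 1 → q1.length = 1 → False := by
    intro l1 l2
    obtain ⟨e1, he1⟩ := BicAux.eq_edge_of_length_one (hlen01.trans l1)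
    obtain ⟨e2, he2⟩ := BicAux.eq_edge_of_length_one (hlen02.trans l2)
    apply hpq
    apply Subtype.ext
    rw [he1, he2]
  have hdeg : ∀ z ∈ S, ∀ y, ∃ c, H'.Adj z c ∧ c ≠ y := by
    intro z hz y
    have h2 : ∃ c1 c2, c1 ≠ c2 ∧ H'.Adj z c1 ∧ H'.Adj z c2 := by
      by_cases hzu : z = u
      · subst hzu
        rcases BicAux.endpoint_two_nbrs p1 q1 hp1 hq1 huv hd1 with h3 | ⟨l1, l2⟩
        · exact h3
        · exact absurd l2 (fun l2 => hcontra l1 l2)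
      · by_cases hzv : z = v
        · subst hzv
          rcases BicAux.endpoint_two_nbrs p1.reverse q1.reverse hp1.reverse hq1.reverse
            huv.symm (fun x h1 h2 => by
              rw [Walk.support_reverse, List.mem_reverse] at h1 h2
              exact (hd1 x h1 h2).symm) with h3 | ⟨l1, l2⟩
          · exact h3
          · rw [Walk.length_reverse] at l1 l2
            exact absurd l2 (fun l2 => hcontra l1 l2)
        · rcases hz with h1 | h1 | h1
          · exact BicAux.internal_two_nbrs p1 hp1 (by rwa [sp1]) hzu hzv
          · exact BicAux.internal_two_nbrs q1 hq1 (by rwa [sq1]) hzu hzv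
          · exact BicAux.internal_two_nbrs P1 hP1 (by rwa [sP1]) hzu hzv
    obtain ⟨c1, c2, hne, h1, h2⟩ := h2
    by_cases hcy : c1 = y
    · exact ⟨c2, h2, fun e => hne (hcy.trans e.symm)⟩
    · exact ⟨c1, h1, hcy⟩
  -- apply the key lemma
  have haP1 : a ∈ P1.support := by rwa [sP1]
  have hbP1 : b ∈ P1.support := by rwa [sP1]
  have haS : a ∈ S := Or.inr (Or.inr ha)
  have hbS : b ∈ S := Or.inr (Or.inr hb)
  set W : H'.Walk b a := (P1.takeUntil b hbP1).reverse.append (P1.takeUntil a haP1) with hWdef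
  obtain ⟨r, s, hr, hsp, hdisj, hedges⟩ :=
    BicAux.key S hS hyp hdeg W.length hab haS hbS W le_rfl
  have pfr : ∀ e ∈ r.edges, e ∈ G.edgeSet := fun e he => hHe e (Walk.edges_subset_edgeSet _ he)
  have pfs : ∀ e ∈ s.edges, e ∈ G.edgeSet := fun e he => hHe e (Walk.edges_subset_edgeSet _ he)
  refine ⟨hab, ⟨r.transfer G pfr, hr.transfer pfr⟩, ⟨s.transfer G pfs, hsp.transfer pfs⟩, ?_, ?_⟩
  · intro hEq
    apply hedges
    have h2 := congrArg (fun t : G.Path a b => t.1.edges) hEq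
    simpa [Walk.edges_transfer] using h2
  · intro x hx1 hx2
    simp only [Walk.support_transfer] at hx1 hx2
    exact hdisj x hx1 hx2
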